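/- arXiv:2110.02820 — 2 statements merged into one kernel-verified Lean document; each statement's English description precedes it below -/
import Mathlib

section
/- Let A be an n×n real symmetric positive semidefinite matrix with eigenvalues λ₁ ≥ ⋯ ≥ λ_n, eigenvectors v₁,…,v_n, and let μ ≥ 0 with λ_n + μ > 0. Fix 1 ≤ ℓ < n, let V_ℓ = [v₁ … v_ℓ], and consider the class 𝒫 of preconditioners P = V_ℓ M V_ℓᵀ + β(I − V_ℓ V_ℓᵀ) where β > 0 and M is an ℓ×ℓ symmetric positive definite matrix. Then for every P ∈ 𝒫, the condition number satisfies κ₂(P^{-1/2}(A + μI)P^{-1/2}) ≥ (λ_{ℓ+1} + μ)/(λ_n + μ). -/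
open Matrix MeasureTheory ProbabilityTheory
open scoped Classical

/-- Moore–Penrose pseudoinverse (characterized by the four Penrose conditions). -/
noncomputable def pinv {m n : ℕ} (A : Matrix (Fin m) (Fin n) ℝ) : Matrix (Fin n) (Fin m) ℝ :=
  if h : ∃ B : Matrix (Fin n) (Fin m) ℝ,
      A * B * A = A ∧ B * A * B = B ∧ (A * B)ᵀ = A * B ∧ (B * A)ᵀ = B * A
  then h.choose else 0

/-- Nyström approximation of `A` with respect to the test matrix `X`. -/
noncomputable def nystrom {n l : ℕ} (A : Matrix (Fin n) (Fin n) ℝ)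
    (X : Matrix (Fin n) (Fin l) ℝ) : Matrix (Fin n) (Fin n) ℝ :=
  A * X * pinv (Xᵀ * A * X) * (A * X)ᵀ

/-- Spectral (ℓ² operator) norm of a matrix. -/
noncomputable def specNorm {m n : ℕ} (M : Matrix (Fin m) (Fin n) ℝ) : ℝ :=
  ‖LinearMap.toContinuousLinearMap (Matrix.toEuclideanLin M)‖

/-- Frobenius norm of a matrix. -/
noncomputable def frobNorm {m n : ℕ} (M : Matrix (Fin m) (Fin n) ℝ) : ℝ :=
  Real.sqrt (∑ i, ∑ j, (M i j) ^ 2)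

/-- Euclidean norm of a vector. -/
noncomputable def euclNorm {n : ℕ} (x : Fin n → ℝ) : ℝ :=
  Real.sqrt (∑ i, (x i) ^ 2)

/-- Law of an `n × l` random matrix with independent standard normal entries. -/
noncomputable def gaussianEnsemble (n l : ℕ) : Measure (Fin n → Fin l → ℝ) :=
  Measure.pi fun _ => Measure.pi fun _ => gaussianReal 0 1

/-- The psd square root of a psd matrix (junk value `0` otherwise). -/
noncomputable def matSqrt {n : ℕ} (M : Matrix (Fin n) (Fin n) ℝ) : Matrix (Fin n) (Fin n) ℝ :=
  if hM : M.PosSemidef then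
    (hM.1.eigenvectorUnitary : Matrix (Fin n) (Fin n) ℝ) *
      Matrix.diagonal (Real.sqrt ∘ hM.1.eigenvalues) *
      (star hM.1.eigenvectorUnitary : Matrix (Fin n) (Fin n) ℝ) else 0

/-- ℓ² condition number of a symmetric matrix: ratio of the largest to the smallest
eigenvalue (junk value `0` for non-symmetric matrices). -/
noncomputable def kappa {n : ℕ} (M : Matrix (Fin n) (Fin n) ℝ) : ℝ :=
  if hM : M.IsHermitian then (⨆ i, hM.eigenvalues i) / (⨅ i, hM.eigenvalues i) else 0

lemma exists_eigenvalue_of_mulVec {n : ℕ} {B : Matrix (Fin n) (Fin n) ℝ}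
    (hB : B.IsHermitian) {c : ℝ} {w : Fin n → ℝ} (hw : w ≠ 0)
    (h : B *ᵥ w = c • w) : ∃ i, hB.eigenvalues i = c := by
  have hc : c ∈ spectrum ℝ B := by
    rw [spectrum.mem_iff]
    intro hu
    set C := algebraMap ℝ (Matrix (Fin n) (Fin n) ℝ) c - B with hC
    have hCw : C *ᵥ w = 0 := by
      rw [hC, Algebra.algebraMap_eq_smul_one, sub_mulVec, smul_mulVec, one_mulVec, h,
        sub_self]
    have hdet := (Matrix.isUnit_iff_isUnit_det _).mp hu
    have h1 : C⁻¹ * C = 1 := nonsing_inv_mul _ hdet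
    refine hw ?_
    calc w = (C⁻¹ * C) *ᵥ w := by rw [h1, one_mulVec]
    _ = C⁻¹ *ᵥ (C *ᵥ w) := (mulVec_mulVec _ _ _).symm
    _ = 0 := by rw [hCw, mulVec_zero]
  rw [hB.spectrum_real_eq_range_eigenvalues] at hc
  exact hc

/-- Optimality lower bound: every preconditioner of the form
`P = V_ℓ M V_ℓᵀ + β(I − V_ℓV_ℓᵀ)` (with `M ≻ 0`, `β > 0`) satisfies
`κ₂(P^{-1/2}(A+μI)P^{-1/2}) ≥ (λ_{ℓ+1}+μ)/(λ_n+μ)`.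
Here `matSqrt P` is the (unique) psd square root of `P`, and 0-indexed
eigenvalues mean `λ_{ℓ+1} = lam ⟨l, _⟩`, `λ_n = lam ⟨n-1, _⟩`. -/
theorem optimal_preconditioner_lower_bound {n : ℕ}
    (A : Matrix (Fin n) (Fin n) ℝ) (hA : A.PosSemidef)
    (lam : Fin n → ℝ) (hanti : Antitone lam)
    (V : Matrix (Fin n) (Fin n) ℝ) (hV : Vᵀ * V = 1)
    (hdecomp : A = V * Matrix.diagonal lam * Vᵀ)
    (μ : ℝ) (hμ : 0 ≤ μ)
    (l : ℕ) (hl1 : 1 ≤ l) (hln : l < n)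
    (hpos : 0 < lam ⟨n - 1, by omega⟩ + μ)
    (β : ℝ) (hβ : 0 < β)
    (M : Matrix (Fin l) (Fin l) ℝ) (hM : M.PosDef)
    (P : Matrix (Fin n) (Fin n) ℝ)
    (hP : P = V.submatrix id (Fin.castLE hln.le) * M * (V.submatrix id (Fin.castLE hln.le))ᵀ
        + β • ((1 : Matrix (Fin n) (Fin n) ℝ)
          - V.submatrix id (Fin.castLE hln.le) * (V.submatrix id (Fin.castLE hln.le))ᵀ)) :
    (lam ⟨l, hln⟩ + μ) / (lam ⟨n - 1, by omega⟩ + μ)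
      ≤ kappa ((matSqrt P)⁻¹ * (A + μ • (1 : Matrix (Fin n) (Fin n) ℝ)) * (matSqrt P)⁻¹) := by
  have hn0 : 0 < n := by omega
  set Vl : Matrix (Fin n) (Fin l) ℝ := V.submatrix id (Fin.castLE hln.le) with hVldef
  -- column inner products of V
  have hcol : ∀ a b : Fin n, (∑ i, V i a * V i b) = if a = b then 1 else 0 := by
    intro a b
    have := congrFun (congrFun hV a) b
    simpa [Matrix.mul_apply, Matrix.one_apply] using this
  have hVV' : V * Vᵀ = 1 := mul_eq_one_comm.mp hV
  -- eigenvector columns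
  set w : Fin n → (Fin n → ℝ) := fun j i => V i j with hwdef
  have hwne : ∀ j, w j ≠ 0 := by
    intro j h
    have h1 : (∑ i, V i j * V i j) = 1 := by simpa using hcol j j
    have h0 : (∑ i, V i j * V i j) = 0 := by
      refine Finset.sum_eq_zero fun i _ => ?_
      have : w j i = 0 := by rw [h]; rfl
      simp only [hwdef] at this
      rw [this, mul_zero]
    rw [h0] at h1; norm_num at h1
  -- Vlᵀ kills w j for l ≤ j
  have hVlw : ∀ j : Fin n, l ≤ (j : ℕ) → Vlᵀ *ᵥ w j = 0 := by
    intro j hj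
    funext k
    have : (Vlᵀ *ᵥ w j) k = ∑ i, V i (Fin.castLE hln.le k) * V i j := by
      simp [Matrix.mulVec, dotProduct, hVldef, hwdef]
    rw [this, hcol]
    have hne : Fin.castLE hln.le k ≠ j := by
      intro he
      have : (k : ℕ) = (j : ℕ) := congrArg Fin.val he
      omega
    simp [hne]
  -- Vᵀ applied to w j
  have hVtw : ∀ j : Fin n, Vᵀ *ᵥ w j = Pi.single j 1 := by
    intro j
    funext k
    have : (Vᵀ *ᵥ w j) k = ∑ i, V i k * V i j := by
      simp [Matrix.mulVec, dotProduct, hwdef]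
    rw [this, hcol]
    by_cases h : k = j <;> simp [h, Pi.single_apply]
  -- (A + μ I) acting on w j
  have hAw : ∀ j : Fin n, (A + μ • (1 : Matrix (Fin n) (Fin n) ℝ)) *ᵥ w j
      = (lam j + μ) • w j := by
    intro j
    have hA1 : A *ᵥ w j = lam j • w j := by
      rw [hdecomp, ← mulVec_mulVec, ← mulVec_mulVec, hVtw, diagonal_mulVec_single]
      funext i
      simp [Matrix.mulVec_single, hwdef, mul_comm]
    rw [add_mulVec, hA1, smul_mulVec, one_mulVec, add_smul]
  -- P acting on w j
  have hPw : ∀ j : Fin n, l ≤ (j : ℕ) → P *ᵥ w j = β • w j := by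
    intro j hj
    rw [hP, add_mulVec, ← mulVec_mulVec, ← mulVec_mulVec, hVlw j hj, mulVec_zero, mulVec_zero,
      smul_mulVec, sub_mulVec, one_mulVec, ← mulVec_mulVec, hVlw j hj, mulVec_zero,
      sub_zero, zero_add]
  -- Vlᵀ * Vl = 1
  have hVlV : Vlᵀ * Vl = 1 := by
    ext a b
    have h1 : (Vlᵀ * Vl) a b = ∑ i, V i (Fin.castLE hln.le a) * V i (Fin.castLE hln.le b) := by
      simp [Matrix.mul_apply, hVldef]
    rw [h1, hcol]
    have h2 : Fin.castLE hln.le a = Fin.castLE hln.le b ↔ a = b := by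
      constructor
      · intro h; exact Fin.ext (by simpa using congrArg Fin.val h)
      · intro h; rw [h]
    simp only [Matrix.one_apply]
    by_cases h : a = b <;> simp [h, h2]
  -- conj transposes are transposes
  have hVlH : Vlᴴ = Vlᵀ := conjTranspose_eq_transpose_of_trivial _
  -- the projection Q := 1 - Vl Vlᵀ is psd
  have hQherm : ((1 : Matrix (Fin n) (Fin n) ℝ) - Vl * Vlᵀ).IsHermitian := by
    have : (Vl * Vlᵀ).IsHermitian := by
      have := Matrix.isHermitian_mul_conjTranspose_self Vl
      rwa [hVlH] at this
    exact (Matrix.isHermitian_one).sub this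
  have hQpsd : ((1 : Matrix (Fin n) (Fin n) ℝ) - Vl * Vlᵀ).PosSemidef := by
    set Q : Matrix (Fin n) (Fin n) ℝ := 1 - Vl * Vlᵀ with hQ
    have hidem : Vl * Vlᵀ * (Vl * Vlᵀ) = Vl * Vlᵀ := by
      rw [Matrix.mul_assoc, ← Matrix.mul_assoc Vlᵀ, hVlV, Matrix.one_mul]
    have hQQ : Q = Qᴴ * Q := by
      have h2 : Q * Q = Q := by
        rw [hQ]
        simp only [Matrix.sub_mul, Matrix.mul_sub, Matrix.one_mul, Matrix.mul_one, hidem]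
        abel
      rw [hQherm.eq, h2]
    rw [hQQ]
    exact Matrix.posSemidef_conjTranspose_mul_self Q
  -- P is positive definite
  have hPpd : P.PosDef := by
    have hMlpsd : (Vl * M * Vlᵀ).PosSemidef := by
      have := hM.posSemidef.mul_mul_conjTranspose_same Vl
      rwa [hVlH] at this
    rw [Matrix.posDef_iff_dotProduct_mulVec]
    constructor
    · rw [hP]
      refine hMlpsd.isHermitian.add ?_
      show (β • ((1 : Matrix (Fin n) (Fin n) ℝ) - Vl * Vlᵀ))ᴴ = _
      rw [Matrix.conjTranspose_smul, star_trivial, hQherm.eq]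
    · intro x hx
      rw [hP, add_mulVec, dotProduct_add, smul_mulVec, dotProduct_smul]
      have ht1 : 0 ≤ star x ⬝ᵥ (Vl * M * Vlᵀ) *ᵥ x := hMlpsd.dotProduct_mulVec_nonneg x
      have ht2 : 0 ≤ star x ⬝ᵥ ((1 : Matrix (Fin n) (Fin n) ℝ) - Vl * Vlᵀ) *ᵥ x := hQpsd.dotProduct_mulVec_nonneg x
      by_cases hy : Vlᵀ *ᵥ x = 0
      · -- projection term is positive
        have h2 : star x ⬝ᵥ ((1 : Matrix (Fin n) (Fin n) ℝ) - Vl * Vlᵀ) *ᵥ x = x ⬝ᵥ x := by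
          rw [sub_mulVec, one_mulVec, ← mulVec_mulVec, hy, mulVec_zero, sub_zero, star_trivial]
        have hxx : 0 < x ⬝ᵥ x := by
          have := Matrix.dotProduct_star_self_pos_iff (v := x) |>.mpr hx
          simpa using this
        have h3 : 0 < β * (star x ⬝ᵥ ((1 : Matrix (Fin n) (Fin n) ℝ) - Vl * Vlᵀ) *ᵥ x) := by
          rw [h2]; exact mul_pos hβ hxx
        have h4 : β • (star x ⬝ᵥ ((1 : Matrix (Fin n) (Fin n) ℝ) - Vl * Vlᵀ) *ᵥ x)
            = β * (star x ⬝ᵥ ((1 : Matrix (Fin n) (Fin n) ℝ) - Vl * Vlᵀ) *ᵥ x) := rfl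
        rw [h4]
        linarith
      · -- M term is positive
        have h1 : star x ⬝ᵥ (Vl * M * Vlᵀ) *ᵥ x
            = star (Vlᵀ *ᵥ x) ⬝ᵥ M *ᵥ (Vlᵀ *ᵥ x) := by
          rw [← mulVec_mulVec, ← mulVec_mulVec, dotProduct_mulVec, ← mulVec_transpose]
          rw [star_trivial, star_trivial]
        have h5 := hM.dotProduct_mulVec_pos hy
        rw [← h1] at h5
        have h2 : 0 ≤ β * (star x ⬝ᵥ ((1 : Matrix (Fin n) (Fin n) ℝ) - Vl * Vlᵀ) *ᵥ x) :=
          mul_nonneg hβ.le ht2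
        have h4 : β • (star x ⬝ᵥ ((1 : Matrix (Fin n) (Fin n) ℝ) - Vl * Vlᵀ) *ᵥ x)
            = β * (star x ⬝ᵥ ((1 : Matrix (Fin n) (Fin n) ℝ) - Vl * Vlᵀ) *ᵥ x) := rfl
        rw [h4]
        linarith
  -- matSqrt facts
  have hPpsd : P.PosSemidef := hPpd.posSemidef
  set S : Matrix (Fin n) (Fin n) ℝ := matSqrt P with hSdef
  have hSeq : S = (hPpsd.1.eigenvectorUnitary : Matrix (Fin n) (Fin n) ℝ) *
      Matrix.diagonal (Real.sqrt ∘ hPpsd.1.eigenvalues) *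
      (star hPpsd.1.eigenvectorUnitary : Matrix (Fin n) (Fin n) ℝ) := by
    rw [hSdef, matSqrt, dif_pos hPpsd]
  have hUU : (star hPpsd.1.eigenvectorUnitary : Matrix (Fin n) (Fin n) ℝ)
      * (hPpsd.1.eigenvectorUnitary : Matrix (Fin n) (Fin n) ℝ) = 1 := Unitary.coe_star_mul_self _
  have hSpsd : S.PosSemidef := by
    rw [hSeq, star_eq_conjTranspose]
    exact (Matrix.posSemidef_diagonal_iff.mpr fun i => Real.sqrt_nonneg _).mul_mul_conjTranspose_same _
  have hSS : S * S = P := by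
    rw [hSeq]
    conv_rhs => rw [hPpsd.1.spectral_theorem, Unitary.conjStarAlgAut_apply]
    have hD : Matrix.diagonal (Real.sqrt ∘ hPpsd.1.eigenvalues)
        * Matrix.diagonal (Real.sqrt ∘ hPpsd.1.eigenvalues)
        = Matrix.diagonal (RCLike.ofReal ∘ hPpsd.1.eigenvalues) := by
      rw [Matrix.diagonal_mul_diagonal]
      congr 1; funext i
      simp [Real.mul_self_sqrt (hPpsd.eigenvalues_nonneg i)]
    rw [← hD]
    simp only [Matrix.mul_assoc]
    rw [← Matrix.mul_assoc _ _ (Matrix.diagonal _ * _), hUU, Matrix.one_mul]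
  have hSdet : IsUnit S.det := by
    have h1 : S.det * S.det = P.det := by rw [← Matrix.det_mul, hSS]
    have hPdet : 0 < P.det := hPpd.det_pos
    have h2 : S.det ≠ 0 := by
      intro h; rw [h, mul_zero] at h1; rw [← h1] at hPdet; exact lt_irrefl _ hPdet
    exact h2.isUnit
  have hSinvS : S⁻¹ * S = 1 := nonsing_inv_mul _ hSdet
  have hSSinv : S * S⁻¹ = 1 := mul_nonsing_inv _ hSdet
  -- S acting on w j
  set c : ℝ := Real.sqrt β with hcdef
  have hc : 0 < c := Real.sqrt_pos.mpr hβ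
  have hc2 : c * c = β := Real.mul_self_sqrt hβ.le
  have hSw : ∀ j : Fin n, l ≤ (j : ℕ) → S *ᵥ w j = c • w j := by
    intro j hj
    have hu0 : (S + c • (1 : Matrix (Fin n) (Fin n) ℝ)) *ᵥ (S *ᵥ w j - c • w j) = 0 := by
      have e1 : S *ᵥ (S *ᵥ w j) = β • w j := by rw [mulVec_mulVec, hSS, hPw j hj]
      rw [add_mulVec, mulVec_sub, mulVec_sub, e1, mulVec_smul, smul_mulVec,
        smul_mulVec, one_mulVec, one_mulVec, smul_smul, hc2]
      abel
    have hcId : (c • (1 : Matrix (Fin n) (Fin n) ℝ)).PosDef := by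
      rw [Matrix.posDef_iff_dotProduct_mulVec]
      constructor
      · show (c • (1 : Matrix (Fin n) (Fin n) ℝ))ᴴ = _
        rw [Matrix.conjTranspose_smul, star_trivial, Matrix.conjTranspose_one]
      · intro x hx
        rw [smul_mulVec, one_mulVec, dotProduct_smul]
        have hxx : 0 < star x ⬝ᵥ x := Matrix.dotProduct_star_self_pos_iff.mpr hx
        exact smul_pos hc hxx
    have hSum : (S + c • (1 : Matrix (Fin n) (Fin n) ℝ)).PosDef :=
      Matrix.PosDef.posSemidef_add hSpsd hcId
    have hu : S *ᵥ w j - c • w j = 0 := by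
      by_contra hne
      have := hSum.dotProduct_mulVec_pos hne
      rw [hu0, dotProduct_zero] at this
      exact lt_irrefl _ this
    exact sub_eq_zero.mp hu
  -- S⁻¹ acting on w j
  have hSinvw : ∀ j : Fin n, l ≤ (j : ℕ) → S⁻¹ *ᵥ w j = c⁻¹ • w j := by
    intro j hj
    have h1 : w j = c • (S⁻¹ *ᵥ w j) := by
      calc w j = (S⁻¹ * S) *ᵥ w j := by rw [hSinvS, one_mulVec]
      _ = S⁻¹ *ᵥ (S *ᵥ w j) := (mulVec_mulVec _ _ _).symm
      _ = S⁻¹ *ᵥ (c • w j) := by rw [hSw j hj]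
      _ = c • (S⁻¹ *ᵥ w j) := mulVec_smul _ _ _
    have h2 : c⁻¹ • w j = S⁻¹ *ᵥ w j := by
      nth_rewrite 1 [h1]
      rw [smul_smul, inv_mul_cancel₀ hc.ne', one_smul]
    exact h2.symm
  -- the preconditioned matrix B and its eigenvector relations
  set B : Matrix (Fin n) (Fin n) ℝ := S⁻¹ * (A + μ • (1 : Matrix (Fin n) (Fin n) ℝ)) * S⁻¹
    with hBdef
  have hBw : ∀ j : Fin n, l ≤ (j : ℕ) → B *ᵥ w j = ((lam j + μ) / β) • w j := by
    intro j hj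
    rw [hBdef, ← mulVec_mulVec, ← mulVec_mulVec, hSinvw j hj, mulVec_smul, hAw j,
      mulVec_smul, mulVec_smul, hSinvw j hj, smul_smul, smul_smul]
    congr 1
    rw [← hc2]
    field_simp
  -- hermiticity
  have hABherm : (A + μ • (1 : Matrix (Fin n) (Fin n) ℝ)).IsHermitian := by
    refine hA.isHermitian.add ?_
    show (μ • (1 : Matrix (Fin n) (Fin n) ℝ))ᴴ = _
    rw [Matrix.conjTranspose_smul, star_trivial, Matrix.conjTranspose_one]
  have hSinvH : (S⁻¹).IsHermitian := hSpsd.isHermitian.inv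
  have hSinvT : (S⁻¹)ᵀ = S⁻¹ := by
    rw [← conjTranspose_eq_transpose_of_trivial]; exact hSinvH.eq
  have hBherm : B.IsHermitian := by
    have h := Matrix.isHermitian_conjTranspose_mul_mul (S⁻¹) hABherm
    rw [hSinvH.eq] at h
    exact h
  -- positive definiteness of A + μI
  have hdecomp2 : A + μ • (1 : Matrix (Fin n) (Fin n) ℝ)
      = V * Matrix.diagonal (fun i => lam i + μ) * Vᵀ := by
    have h1 : Matrix.diagonal (fun i : Fin n => lam i + μ)
        = Matrix.diagonal lam + μ • (1 : Matrix (Fin n) (Fin n) ℝ) := by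
      ext i k
      rcases eq_or_ne i k with rfl | h
      · simp [Matrix.one_apply]
      · simp [Matrix.diagonal_apply_ne _ h, Matrix.one_apply_ne h]
    rw [h1, Matrix.mul_add, Matrix.add_mul, ← hdecomp, Matrix.mul_smul, Matrix.smul_mul,
      Matrix.mul_one, hVV']
  have hdiagpd : (Matrix.diagonal (fun i : Fin n => lam i + μ)).PosDef := by
    rw [Matrix.posDef_diagonal_iff]
    intro i
    have hle : lam ⟨n - 1, by omega⟩ ≤ lam i := by
      refine hanti ?_
      show (i : ℕ) ≤ n - 1
      omega
    linarith
  have hABpd : (A + μ • (1 : Matrix (Fin n) (Fin n) ℝ)).PosDef := by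
    refine Matrix.PosDef.of_dotProduct_mulVec_pos hABherm fun x hx => ?_
    rw [hdecomp2, ← mulVec_mulVec, ← mulVec_mulVec, dotProduct_mulVec, ← mulVec_transpose,
      star_trivial]
    have hy : Vᵀ *ᵥ x ≠ 0 := by
      intro h
      refine hx ?_
      calc x = (V * Vᵀ) *ᵥ x := by rw [hVV', one_mulVec]
      _ = V *ᵥ (Vᵀ *ᵥ x) := (mulVec_mulVec _ _ _).symm
      _ = 0 := by rw [h, mulVec_zero]
    have := hdiagpd.dotProduct_mulVec_pos hy
    simpa using this
  -- positive definiteness of B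
  have hBpd : B.PosDef := by
    refine Matrix.PosDef.of_dotProduct_mulVec_pos hBherm fun x hx => ?_
    show 0 < star x ⬝ᵥ (S⁻¹ * (A + μ • (1 : Matrix (Fin n) (Fin n) ℝ)) * S⁻¹) *ᵥ x
    rw [← mulVec_mulVec, ← mulVec_mulVec, dotProduct_mulVec, ← mulVec_transpose, hSinvT,
      star_trivial]
    have hz : S⁻¹ *ᵥ x ≠ 0 := by
      intro h
      refine hx ?_
      calc x = (S * S⁻¹) *ᵥ x := by rw [hSSinv, one_mulVec]
      _ = S *ᵥ (S⁻¹ *ᵥ x) := (mulVec_mulVec _ _ _).symm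
      _ = 0 := by rw [h, mulVec_zero]
    have := hABpd.dotProduct_mulVec_pos hz
    simpa using this
  -- extract the two eigenvalues
  have hjl : l ≤ ((⟨l, hln⟩ : Fin n) : ℕ) := le_refl l
  have hjn : l ≤ ((⟨n - 1, by omega⟩ : Fin n) : ℕ) := by simp; omega
  obtain ⟨i1, hi1⟩ := exists_eigenvalue_of_mulVec hBherm (hwne ⟨l, hln⟩)
    (hBw ⟨l, hln⟩ hjl)
  obtain ⟨i2, hi2⟩ := exists_eigenvalue_of_mulVec hBherm (hwne ⟨n - 1, by omega⟩)
    (hBw ⟨n - 1, by omega⟩ hjn)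
  -- bounds on sup and inf of eigenvalues
  have hbddA : BddAbove (Set.range hBherm.eigenvalues) := (Set.finite_range _).bddAbove
  have hbddB : BddBelow (Set.range hBherm.eigenvalues) := (Set.finite_range _).bddBelow
  have hsup : (lam ⟨l, hln⟩ + μ) / β ≤ ⨆ i, hBherm.eigenvalues i := by
    rw [← hi1]; exact le_ciSup hbddA i1
  have hinfle : (⨅ i, hBherm.eigenvalues i) ≤ (lam ⟨n - 1, by omega⟩ + μ) / β := by
    rw [← hi2]; exact ciInf_le hbddB i2
  haveI : Nonempty (Fin n) := ⟨⟨l, hln⟩⟩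
  have hinfpos : 0 < ⨅ i, hBherm.eigenvalues i := by
    obtain ⟨i0, -, hmin⟩ := Finset.exists_min_image Finset.univ hBherm.eigenvalues
      ⟨⟨l, hln⟩, Finset.mem_univ _⟩
    have heq : (⨅ i, hBherm.eigenvalues i) = hBherm.eigenvalues i0 :=
      le_antisymm (ciInf_le hbddB i0) (le_ciInf fun i => hmin i (Finset.mem_univ i))
    rw [heq]
    exact hBpd.eigenvalues_pos i0
  -- finish with arithmetic
  have hkappa : kappa B = (⨆ i, hBherm.eigenvalues i) / (⨅ i, hBherm.eigenvalues i) := by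
    rw [kappa, dif_pos hBherm]
  rw [hkappa]
  have hb : 0 < lam ⟨n - 1, by omega⟩ + μ := hpos
  have hab : lam ⟨n - 1, by omega⟩ + μ ≤ lam ⟨l, hln⟩ + μ := by
    have : lam ⟨n - 1, by omega⟩ ≤ lam ⟨l, hln⟩ := by
      refine hanti ?_
      show l ≤ n - 1
      omega
    linarith
  have ha : 0 < lam ⟨l, hln⟩ + μ := lt_of_lt_of_le hb hab
  have hstep : (lam ⟨l, hln⟩ + μ) / (lam ⟨n - 1, by omega⟩ + μ)
      = ((lam ⟨l, hln⟩ + μ) / β) / ((lam ⟨n - 1, by omega⟩ + μ) / β) := by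
    field_simp
  rw [hstep]
  exact div_le_div₀ (le_trans (div_pos ha hβ).le hsup) hsup hinfpos hinfle
end

section
/- Let A be an n×n real symmetric positive semidefinite matrix with eigenvalues λ₁ ≥ ⋯ ≥ λ_n, let μ > 0, and define the effective dimension d_eff(μ) = ∑_{j=1}^{n} λ_j/(λ_j+μ). Fix γ > 0. If an index j with 1 ≤ j ≤ n satisfies j ≥ (1 + γ⁻¹)·d_eff(μ), then λ_j ≤ γμ. -/
open Matrix MeasureTheory ProbabilityTheory
open scoped Classical

/-- If `j ≥ (1 + γ⁻¹)·d_eff(μ)` then `λ_j ≤ γμ`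
(1-indexed `j`, so `λ_j = lam ⟨j-1, _⟩`). -/
theorem effective_dimension_eigenvalue_bound {n : ℕ}
    (A : Matrix (Fin n) (Fin n) ℝ) (hA : A.PosSemidef)
    (lam : Fin n → ℝ) (hanti : Antitone lam)
    (V : Matrix (Fin n) (Fin n) ℝ) (hV : Vᵀ * V = 1)
    (hdecomp : A = V * Matrix.diagonal lam * Vᵀ)
    (μ : ℝ) (hμ : 0 < μ) (γ : ℝ) (hγ : 0 < γ)
    (j : ℕ) (hj1 : 1 ≤ j) (hjn : j ≤ n)
    (hj : (1 + γ⁻¹) * ∑ i, lam i / (lam i + μ) ≤ (j : ℝ)) :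
    lam ⟨j - 1, by omega⟩ ≤ γ * μ := by
  -- all eigenvalues are nonnegative
  have hlam : ∀ i, 0 ≤ lam i := by
    intro i
    have h1 : Vᵀ * A * V = Matrix.diagonal lam := by
      rw [hdecomp]
      calc Vᵀ * (V * Matrix.diagonal lam * Vᵀ) * V
          = (Vᵀ * V) * Matrix.diagonal lam * (Vᵀ * V) := by simp only [mul_assoc]
        _ = Matrix.diagonal lam := by rw [hV]; simp
    have h2 : (Matrix.diagonal lam).PosSemidef := by
      rw [← h1]
      have := hA.mul_mul_conjTranspose_same Vᵀ
      simpa [Matrix.conjTranspose_eq_transpose_of_trivial, mul_assoc] using this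
    exact Matrix.posSemidef_diagonal_iff.mp h2 i
  by_contra hcon
  push_neg at hcon
  set b : Fin n := ⟨j - 1, by omega⟩ with hb
  set c : ℝ := γ / (γ + 1) with hc
  have hγ1 : 0 < γ + 1 := by linarith
  -- each term is nonnegative
  have hterm : ∀ i : Fin n, 0 ≤ lam i / (lam i + μ) := fun i =>
    div_nonneg (hlam i) (by have := hlam i; linarith)
  -- for i ≤ b, the term exceeds c
  have hbig : ∀ i ∈ Finset.Iic b, c < lam i / (lam i + μ) := by
    intro i hi
    have hle : lam b ≤ lam i := hanti (Finset.mem_Iic.mp hi)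
    have hli : γ * μ < lam i := lt_of_lt_of_le hcon hle
    have hpos : 0 < lam i + μ := by nlinarith
    rw [hc, div_lt_div_iff₀ hγ1 hpos]
    nlinarith
  have hcard : (Finset.Iic b).card = j := by
    rw [Fin.card_Iic]; show j - 1 + 1 = j; omega
  have hne : (Finset.Iic b).Nonempty := ⟨b, Finset.mem_Iic.mpr le_rfl⟩
  have hsum1 : (j : ℝ) * c < ∑ i ∈ Finset.Iic b, lam i / (lam i + μ) := by
    have := Finset.sum_lt_sum_of_nonempty hne hbig
    simpa [hcard, mul_comm] using this
  have hsum2 : ∑ i ∈ Finset.Iic b, lam i / (lam i + μ) ≤ ∑ i, lam i / (lam i + μ) :=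
    Finset.sum_le_sum_of_subset_of_nonneg (Finset.subset_univ _) (fun i _ _ => hterm i)
  have hkey : (j : ℝ) * c < ∑ i, lam i / (lam i + μ) := lt_of_lt_of_le hsum1 hsum2
  have h1γ : 1 + γ⁻¹ = (γ + 1) / γ := by field_simp
  have : (j : ℝ) < (1 + γ⁻¹) * ∑ i, lam i / (lam i + μ) := by
    rw [h1γ]
    rw [hc] at hkey
    rw [div_mul_eq_mul_div, lt_div_iff₀ hγ]
    calc (j : ℝ) * γ = ((j : ℝ) * (γ / (γ + 1))) * (γ + 1) := by field_simp
      _ < (∑ i, lam i / (lam i + μ)) * (γ + 1) := by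
          exact mul_lt_mul_of_pos_right hkey hγ1
      _ = (γ + 1) * ∑ i, lam i / (lam i + μ) := mul_comm _ _
  linarith
end
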